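/- Let D be a self-adjoint (possibly unbounded) operator on a Hilbert space and A a bounded self-adjoint operator. Setting F_T = T(1 + T²)^{-1/2} for self-adjoint T, one has the norm estimate ‖F_{D+A} − F_D‖ ≤ ‖A‖. Consequently the map A ↦ F_{D+A} is (uniformly) continuous from bounded self-adjoint perturbations to bounded operators. -/

import Mathlib

set_option maxHeartbeats 1000000
set_option synthInstance.maxHeartbeats 400000
open Real MeasureTheory intervalIntegral ContinuousLinearMap

/-- The bounded transform `F_T = T(1 + T²)^{-1/2}` of a self-adjoint operator `T`,
defined via the continuous functional calculus. -/
noncomputable def boundedTransform {H : Type*} [NormedAddCommGroup H]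
    [InnerProductSpace ℂ H] [CompleteSpace H] (T : H →L[ℂ] H) : H →L[ℂ] H :=
  cfc (fun t : ℝ => t / Real.sqrt (1 + t ^ 2)) T

section helpers
variable {H : Type*} [NormedAddCommGroup H] [InnerProductSpace ℂ H] [CompleteSpace H]

local notation "⟪" x ", " y "⟫" => @inner ℂ _ _ x y

lemma inner_selfAdj {B : H →L[ℂ] H} (hB : IsSelfAdjoint B) (x y : H) :
    ⟪B x, y⟫ = ⟪x, B y⟫ := by
  conv_rhs => rw [← hB.adjoint_eq]
  exact (ContinuousLinearMap.adjoint_inner_right B x y).symm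

lemma sqrt_cs {c a b x y : ℝ} (hc : 0 ≤ c) (ha : 0 ≤ a) (hb : 0 ≤ b) (hx : 0 ≤ x) (hy : 0 ≤ y) :
    c * a * x + b * y ≤ Real.sqrt (c * a ^ 2 + b ^ 2) * Real.sqrt (c * x ^ 2 + y ^ 2) := by
  rw [← Real.sqrt_mul (by positivity)]
  rw [show c * a * x + b * y = Real.sqrt ((c * a * x + b * y) ^ 2) by
    rw [Real.sqrt_sq (by positivity)]]
  apply Real.sqrt_le_sqrt
  nlinarith [sq_nonneg (a * y - b * x), sq_nonneg (c * a * y - b * x), mul_nonneg ha hy,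
    mul_nonneg hb hx, sq_nonneg (a*y + b*x)]

lemma gl_diff_norm (S T : H →L[ℂ] H) (hS : IsSelfAdjoint S) (hT : IsSelfAdjoint T)
    {c : ℝ} (hc : 0 < c) :
    ‖cfc (fun t : ℝ => t / (c + t ^ 2)) S - cfc (fun t : ℝ => t / (c + t ^ 2)) T‖ ≤
      c⁻¹ * ‖S - T‖ := by
  have hden : ∀ t : ℝ, c + t ^ 2 ≠ 0 := fun t => by positivity
  have hcont_inv : Continuous fun t : ℝ => (c + t ^ 2)⁻¹ :=
    ((continuous_const.add (continuous_pow 2)).inv₀ hden)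
  have hcont_sq : Continuous fun t : ℝ => c + t ^ 2 := continuous_const.add (continuous_pow 2)
  set r : ℝ → ℝ := fun t => (c + t ^ 2)⁻¹ with hrdef
  set e : H →L[ℂ] H := algebraMap ℝ (H →L[ℂ] H) c with he
  -- generic facts about any self-adjoint X
  have hrP : ∀ (X : H →L[ℂ] H), IsSelfAdjoint X →
      cfc r X * (e + X * X) = 1 ∧ (e + X * X) * cfc r X = 1 := by
    intro X hX
    have hcfcP : cfc (fun t : ℝ => c + t ^ 2) X = e + X * X := by
      rw [cfc_add X (fun _ : ℝ => c) (fun t : ℝ => t ^ 2) continuousOn_const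
        (continuous_pow 2).continuousOn, cfc_const c X hX]
      congr 1
      rw [show (fun t : ℝ => t ^ 2) = fun t : ℝ => t * t by ext t; ring,
        cfc_mul (fun t : ℝ => t) (fun t : ℝ => t) X continuous_id.continuousOn
          continuous_id.continuousOn, cfc_id' ℝ X hX]
    constructor
    · rw [← hcfcP, ← cfc_mul r (fun t : ℝ => c + t ^ 2) X hcont_inv.continuousOn
        hcont_sq.continuousOn,
        show (fun t : ℝ => r t * (c + t ^ 2)) = fun _ : ℝ => (1:ℝ) from
          funext fun t => inv_mul_cancel₀ (hden t)]
      exact cfc_const_one ℝ X hX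
    · rw [← hcfcP, ← cfc_mul (fun t : ℝ => c + t ^ 2) r X hcont_sq.continuousOn
        hcont_inv.continuousOn,
        show (fun t : ℝ => (c + t ^ 2) * r t) = fun _ : ℝ => (1:ℝ) from
          funext fun t => mul_inv_cancel₀ (hden t)]
      exact cfc_const_one ℝ X hX
  have hgl : ∀ (X : H →L[ℂ] H), IsSelfAdjoint X →
      cfc (fun t : ℝ => t / (c + t ^ 2)) X = cfc r X * X ∧
      cfc (fun t : ℝ => t / (c + t ^ 2)) X = X * cfc r X := by
    intro X hX
    constructor
    · rw [show (fun t : ℝ => t / (c + t ^ 2)) = fun t : ℝ => r t * t from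
        funext fun t => by rw [hrdef]; ring,
        cfc_mul r (fun t : ℝ => t) X hcont_inv.continuousOn continuous_id.continuousOn,
        cfc_id' ℝ X hX]
    · rw [show (fun t : ℝ => t / (c + t ^ 2)) = fun t : ℝ => t * r t from
        funext fun t => by rw [hrdef]; ring,
        cfc_mul (fun t : ℝ => t) r X continuous_id.continuousOn hcont_inv.continuousOn,
        cfc_id' ℝ X hX]
  set rS : H →L[ℂ] H := cfc r S with hrSdef
  set rT : H →L[ℂ] H := cfc r T with hrTdef
  have hrS_sa : IsSelfAdjoint rS := cfc_predicate r S
  have hrT_sa : IsSelfAdjoint rT := cfc_predicate r T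
  set X' : H →L[ℂ] H := S - T with hX'
  set M : H →L[ℂ] H := e * X' - S * X' * T with hM
  -- the key algebraic identity
  have key : cfc (fun t : ℝ => t / (c + t ^ 2)) S - cfc (fun t : ℝ => t / (c + t ^ 2)) T
      = rS * M * rT := by
    have h1 : rS * (S * (e + T * T)) * rT = cfc (fun t : ℝ => t / (c + t ^ 2)) S := by
      calc rS * (S * (e + T * T)) * rT = (rS * S) * ((e + T * T) * rT) := by
            simp only [mul_assoc]
        _ = rS * S := by rw [(hrP T hT).2, mul_one]
        _ = cfc (fun t : ℝ => t / (c + t ^ 2)) S := ((hgl S hS).1).symm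
    have h2 : rS * ((e + S * S) * T) * rT = cfc (fun t : ℝ => t / (c + t ^ 2)) T := by
      calc rS * ((e + S * S) * T) * rT = (rS * (e + S * S)) * (T * rT) := by
            simp only [mul_assoc]
        _ = T * rT := by rw [(hrP S hS).1, one_mul]
        _ = cfc (fun t : ℝ => t / (c + t ^ 2)) T := ((hgl T hT).2).symm
    have hmid : S * (e + T * T) - (e + S * S) * T = M := by
      have hcomm : S * e = e * S := (Algebra.commutes c S).symm
      rw [hM, hX']
      rw [show S * (e + T * T) = e * S + S * (T * T) by rw [mul_add, hcomm]]
      noncomm_ring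
    rw [← h1, ← h2, ← sub_mul, ← mul_sub, hmid]
  -- resolvent norm bound
  have hr_norm : ∀ X : H →L[ℂ] H, ‖cfc r X‖ ≤ c⁻¹ := by
    intro X
    apply norm_cfc_le (by positivity)
    intro t _
    rw [hrdef, Real.norm_eq_abs, abs_of_pos (by positivity)]
    exact inv_anti₀ hc (by nlinarith [sq_nonneg t])
  -- quadratic estimate
  have quad : ∀ (X : H →L[ℂ] H), IsSelfAdjoint X → ∀ ξ : H,
      c * ‖cfc r X ξ‖ ^ 2 + ‖X (cfc r X ξ)‖ ^ 2 ≤ c⁻¹ * ‖ξ‖ ^ 2 := by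
    intro X hX ξ
    set v := cfc r X ξ with hv
    have happ : (e + X * X) v = ξ := by
      calc (e + X * X) v = ((e + X * X) * cfc r X) ξ := rfl
        _ = ξ := by rw [(hrP X hX).2, ContinuousLinearMap.one_apply]
    have hev : e v = (c : ℂ) • v := by
      rw [he, Algebra.algebraMap_eq_smul_one, ContinuousLinearMap.smul_apply,
        ContinuousLinearMap.one_apply, RCLike.real_smul_eq_coe_smul (K := ℂ)]
      rfl
    have hinner : ⟪v, ξ⟫ = ((c * ‖v‖ ^ 2 + ‖X v‖ ^ 2 : ℝ) : ℂ) := by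
      rw [← happ]
      rw [show (e + X * X) v = e v + X (X v) from rfl, hev, inner_add_right,
        inner_smul_right, ← inner_selfAdj hX, inner_self_eq_norm_sq_to_K,
        inner_self_eq_norm_sq_to_K]
      simp only [← RCLike.algebraMap_eq_ofReal, Complex.coe_algebraMap]
      push_cast
      ring
    have h1 : c * ‖v‖ ^ 2 + ‖X v‖ ^ 2 ≤ ‖v‖ * ‖ξ‖ := by
      have h2 : RCLike.re (K := ℂ) ⟪v, ξ⟫ ≤ ‖⟪v, ξ⟫‖ := RCLike.re_le_norm _
      rw [hinner] at h2
      simp only [RCLike.re_to_complex, Complex.ofReal_re] at h2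
      calc c * ‖v‖ ^ 2 + ‖X v‖ ^ 2 ≤ ‖((c * ‖v‖ ^ 2 + ‖X v‖ ^ 2 : ℝ) : ℂ)‖ := h2
        _ = ‖⟪v, ξ⟫‖ := by rw [hinner]
        _ ≤ ‖v‖ * ‖ξ‖ := norm_inner_le_norm v ξ
    have hvle : ‖v‖ ≤ c⁻¹ * ‖ξ‖ := by
      calc ‖v‖ ≤ ‖cfc r X‖ * ‖ξ‖ := (cfc r X).le_opNorm ξ
        _ ≤ c⁻¹ * ‖ξ‖ := by gcongr; exact hr_norm X
    nlinarith [norm_nonneg ξ, norm_nonneg v]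
  -- pointwise bound
  have main : ∀ ξ : H, ‖(rS * M * rT) ξ‖ ≤ c⁻¹ * ‖X'‖ * ‖ξ‖ := by
    intro ξ
    rcases eq_or_ne ((rS * M * rT) ξ) 0 with h0 | h0
    · rw [h0, norm_zero]; positivity
    set η := (rS * M * rT) ξ with hη
    set w := rT ξ with hw
    set v := rS η with hv
    have hMw : M w = (c : ℂ) • X' w - S (X' (T w)) := by
      rw [hM]
      rw [show (e * X' - S * X' * T) w = e (X' w) - S (X' (T w)) from rfl]
      congr 1
    have hinner : ⟪η, η⟫ = (c : ℂ) * ⟪v, X' w⟫ - ⟪S v, X' (T w)⟫ := by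
      calc ⟪η, η⟫ = ⟪η, rS (M w)⟫ := rfl
        _ = ⟪rS η, M w⟫ := (inner_selfAdj hrS_sa η (M w)).symm
        _ = ⟪v, (c : ℂ) • X' w - S (X' (T w))⟫ := by rw [← hv, hMw]
        _ = (c : ℂ) * ⟪v, X' w⟫ - ⟪v, S (X' (T w))⟫ := by
            rw [inner_sub_right, inner_smul_right]
        _ = (c : ℂ) * ⟪v, X' w⟫ - ⟪S v, X' (T w)⟫ := by rw [inner_selfAdj hS]
    have hsq : ‖η‖ ^ 2 ≤ c * (‖v‖ * ‖X' w‖) + ‖S v‖ * ‖X' (T w)‖ := by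
      have h2 : RCLike.re (K := ℂ) ⟪η, η⟫ ≤ ‖(c : ℂ) * ⟪v, X' w⟫‖ + ‖⟪S v, X' (T w)⟫‖ := by
        calc RCLike.re (K := ℂ) ⟪η, η⟫ ≤ ‖⟪η, η⟫‖ := RCLike.re_le_norm _
          _ ≤ ‖(c : ℂ) * ⟪v, X' w⟫‖ + ‖⟪S v, X' (T w)⟫‖ := by
              rw [hinner]; exact norm_sub_le _ _
      have h3 : RCLike.re (K := ℂ) ⟪η, η⟫ = ‖η‖ ^ 2 := inner_self_eq_norm_sq η
      rw [h3] at h2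
      refine h2.trans ?_
      have h4 : ‖(c : ℂ) * ⟪v, X' w⟫‖ = c * ‖⟪v, X' w⟫‖ := by
        rw [norm_mul, Complex.norm_real, Real.norm_eq_abs, abs_of_pos hc]
      rw [h4]
      have n1 : ‖⟪v, X' w⟫‖ ≤ ‖v‖ * ‖X' w‖ := norm_inner_le_norm _ _
      have n2 : ‖⟪S v, X' (T w)⟫‖ ≤ ‖S v‖ * ‖X' (T w)‖ := norm_inner_le_norm _ _
      have := mul_le_mul_of_nonneg_left n1 hc.le
      linarith
    have hcs : c * (‖v‖ * ‖X' w‖) + ‖S v‖ * ‖X' (T w)‖ ≤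
        Real.sqrt (c * ‖v‖ ^ 2 + ‖S v‖ ^ 2) *
          Real.sqrt (c * ‖X' w‖ ^ 2 + ‖X' (T w)‖ ^ 2) := by
      have h := sqrt_cs (c := c) hc.le (norm_nonneg v) (norm_nonneg (S v)) (norm_nonneg (X' w))
        (norm_nonneg (X' (T w)))
      calc c * (‖v‖ * ‖X' w‖) + ‖S v‖ * ‖X' (T w)‖
          = c * ‖v‖ * ‖X' w‖ + ‖S v‖ * ‖X' (T w)‖ := by ring
        _ ≤ _ := h
    have hb1 : c * ‖v‖ ^ 2 + ‖S v‖ ^ 2 ≤ c⁻¹ * ‖η‖ ^ 2 := quad S hS η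
    have hb2 : c * ‖X' w‖ ^ 2 + ‖X' (T w)‖ ^ 2 ≤ ‖X'‖ ^ 2 * (c⁻¹ * ‖ξ‖ ^ 2) := by
      have k1 : ‖X' w‖ ≤ ‖X'‖ * ‖w‖ := X'.le_opNorm w
      have k2 : ‖X' (T w)‖ ≤ ‖X'‖ * ‖T w‖ := X'.le_opNorm (T w)
      have k3 : c * ‖w‖ ^ 2 + ‖T w‖ ^ 2 ≤ c⁻¹ * ‖ξ‖ ^ 2 := quad T hT ξ
      have k1' : ‖X' w‖ ^ 2 ≤ ‖X'‖ ^ 2 * ‖w‖ ^ 2 := by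
        nlinarith [norm_nonneg (X' w), norm_nonneg X', norm_nonneg w]
      have k2' : ‖X' (T w)‖ ^ 2 ≤ ‖X'‖ ^ 2 * ‖T w‖ ^ 2 := by
        nlinarith [norm_nonneg (X' (T w)), norm_nonneg X', norm_nonneg (T w)]
      calc c * ‖X' w‖ ^ 2 + ‖X' (T w)‖ ^ 2
          ≤ c * (‖X'‖ ^ 2 * ‖w‖ ^ 2) + ‖X'‖ ^ 2 * ‖T w‖ ^ 2 := by
            have := mul_le_mul_of_nonneg_left k1' hc.le
            linarith
        _ = ‖X'‖ ^ 2 * (c * ‖w‖ ^ 2 + ‖T w‖ ^ 2) := by ring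
        _ ≤ ‖X'‖ ^ 2 * (c⁻¹ * ‖ξ‖ ^ 2) := mul_le_mul_of_nonneg_left k3 (sq_nonneg _)
    have hfin : Real.sqrt (c * ‖v‖ ^ 2 + ‖S v‖ ^ 2) *
        Real.sqrt (c * ‖X' w‖ ^ 2 + ‖X' (T w)‖ ^ 2) ≤ c⁻¹ * ‖η‖ * (‖X'‖ * ‖ξ‖) := by
      have s1 : Real.sqrt (c * ‖v‖ ^ 2 + ‖S v‖ ^ 2) ≤ Real.sqrt (c⁻¹ * ‖η‖ ^ 2) :=
        Real.sqrt_le_sqrt hb1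
      have s2 : Real.sqrt (c * ‖X' w‖ ^ 2 + ‖X' (T w)‖ ^ 2) ≤
          Real.sqrt (‖X'‖ ^ 2 * (c⁻¹ * ‖ξ‖ ^ 2)) := Real.sqrt_le_sqrt hb2
      have hmul : Real.sqrt (c⁻¹ * ‖η‖ ^ 2) * Real.sqrt (‖X'‖ ^ 2 * (c⁻¹ * ‖ξ‖ ^ 2)) =
          c⁻¹ * ‖η‖ * (‖X'‖ * ‖ξ‖) := by
        rw [← Real.sqrt_mul (by positivity)]
        rw [show c⁻¹ * ‖η‖ ^ 2 * (‖X'‖ ^ 2 * (c⁻¹ * ‖ξ‖ ^ 2)) =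
          (c⁻¹ * ‖η‖ * (‖X'‖ * ‖ξ‖)) ^ 2 by ring]
        exact Real.sqrt_sq (by positivity)
      calc Real.sqrt (c * ‖v‖ ^ 2 + ‖S v‖ ^ 2) *
          Real.sqrt (c * ‖X' w‖ ^ 2 + ‖X' (T w)‖ ^ 2)
          ≤ Real.sqrt (c⁻¹ * ‖η‖ ^ 2) * Real.sqrt (‖X'‖ ^ 2 * (c⁻¹ * ‖ξ‖ ^ 2)) := by
            exact mul_le_mul s1 s2 (Real.sqrt_nonneg _) (Real.sqrt_nonneg _)
        _ = c⁻¹ * ‖η‖ * (‖X'‖ * ‖ξ‖) := hmul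
    have hηpos : 0 < ‖η‖ := norm_pos_iff.mpr h0
    nlinarith [hsq, hcs.trans hfin]
  rw [key]
  refine (rS * M * rT).opNorm_le_bound (by positivity) fun ξ => ?_
  calc ‖(rS * M * rT) ξ‖ ≤ c⁻¹ * ‖X'‖ * ‖ξ‖ := main ξ
    _ = c⁻¹ * ‖S - T‖ * ‖ξ‖ := by rw [hX']


lemma arctan_le_self' {y : ℝ} (hy : 0 ≤ y) : Real.arctan y ≤ y := by
  have h0 : Real.arctan 0 ≤ Real.arctan y := Real.arctan_strictMono.monotone hy
  rw [Real.arctan_zero] at h0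
  have h := Real.le_tan h0 (Real.arctan_lt_pi_div_two y)
  rwa [Real.tan_arctan] at h

lemma scalar_int (t N : ℝ) : ∫ l in (0:ℝ)..N, t / (1 + l ^ 2 + t ^ 2) =
    t / Real.sqrt (1 + t ^ 2) * Real.arctan (N / Real.sqrt (1 + t ^ 2)) := by
  set s := Real.sqrt (1 + t ^ 2) with hsdef
  have hs : 0 < s := Real.sqrt_pos.mpr (by positivity)
  have hs2 : s ^ 2 = 1 + t ^ 2 := Real.sq_sqrt (by positivity)
  have h1 : ∀ l : ℝ, t / (1 + l ^ 2 + t ^ 2) = (t / s ^ 2) * (1 + (l / s) ^ 2)⁻¹ := by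
    intro l
    have h2 : 1 + l ^ 2 + t ^ 2 ≠ 0 := by positivity
    have h3 : 1 + (l / s) ^ 2 ≠ 0 := by positivity
    field_simp
    rw [hs2]
    ring_nf
  rw [intervalIntegral.integral_congr (g := fun l => (t / s ^ 2) * (1 + (l / s) ^ 2)⁻¹)
    (fun l _ => h1 l), intervalIntegral.integral_const_mul,
    intervalIntegral.integral_comp_div (f := fun u : ℝ => (1 + u ^ 2)⁻¹) hs.ne']
  rw [zero_div, integral_inv_one_add_sq, Real.arctan_zero, sub_zero, smul_eq_mul]
  field_simp

section exchange
variable (T : H →L[ℂ] H)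

noncomputable def bigmap : C(ℝ × (spectrum ℝ T), ℝ) :=
  ⟨fun p => (p.2 : ℝ) / (1 + p.1 ^ 2 + (p.2 : ℝ) ^ 2), by
    fun_prop (disch := intros; positivity)⟩

lemma claim_cfcL (hT : IsSelfAdjoint T) (l : ℝ) : cfc (fun t : ℝ => t / (1 + l ^ 2 + t ^ 2)) T =
    cfcL (R := ℝ) hT ((bigmap T).curry l) := by
  have hcont : ContinuousOn (fun t : ℝ => t / (1 + l ^ 2 + t ^ 2)) (spectrum ℝ T) :=
    (continuous_id.div (by fun_prop) (fun t => by positivity)).continuousOn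
  rw [cfc_apply _ T hT hcont, cfcL_apply]
  exact congrArg (cfcHom hT) (ContinuousMap.ext fun x => rfl)

lemma cfc_gl_cont (hT : IsSelfAdjoint T) : Continuous fun l : ℝ => cfc (fun t : ℝ => t / (1 + l ^ 2 + t ^ 2)) T := by
  have : (fun l : ℝ => cfc (fun t : ℝ => t / (1 + l ^ 2 + t ^ 2)) T) =
      fun l => cfcL (R := ℝ) hT ((bigmap T).curry l) := funext (claim_cfcL T hT)
  rw [this]
  exact (cfcL (R := ℝ) hT).continuous.comp ((bigmap T).curry.continuous)

lemma integral_rep (hT : IsSelfAdjoint T) (N : ℝ) :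
    (∫ l in (0:ℝ)..N, cfc (fun t : ℝ => t / (1 + l ^ 2 + t ^ 2)) T) =
      cfc (fun t : ℝ =>
        t / Real.sqrt (1 + t ^ 2) * Real.arctan (N / Real.sqrt (1 + t ^ 2))) T := by
  have hΦcont : Continuous ((bigmap T).curry) := ((bigmap T).curry).continuous
  have hint : IntervalIntegrable (fun l => (bigmap T).curry l) volume 0 N :=
    hΦcont.intervalIntegrable _ _
  have hNcont : Continuous (fun t : ℝ =>
      t / Real.sqrt (1 + t ^ 2) * Real.arctan (N / Real.sqrt (1 + t ^ 2))) := by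
    have hs : ∀ t : ℝ, Real.sqrt (1 + t ^ 2) ≠ 0 := fun t =>
      (Real.sqrt_pos.mpr (by positivity)).ne'
    have hsq : Continuous fun t : ℝ => Real.sqrt (1 + t ^ 2) :=
      Real.continuous_sqrt.comp (by fun_prop)
    exact (continuous_id.div hsq fun t => hs t).mul
      (Real.continuous_arctan.comp (continuous_const.div hsq fun t => hs t))
  calc (∫ l in (0:ℝ)..N, cfc (fun t : ℝ => t / (1 + l ^ 2 + t ^ 2)) T)
      = ∫ l in (0:ℝ)..N, cfcL (R := ℝ) hT ((bigmap T).curry l) := by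
        simp_rw [claim_cfcL T hT]
    _ = cfcL (R := ℝ) hT (∫ l in (0:ℝ)..N, (bigmap T).curry l) :=
        ContinuousLinearMap.intervalIntegral_comp_comm _ hint
    _ = cfc (fun t : ℝ =>
        t / Real.sqrt (1 + t ^ 2) * Real.arctan (N / Real.sqrt (1 + t ^ 2))) T := by
        rw [cfc_apply _ T hT hNcont.continuousOn, cfcL_apply]
        congr 1
        ext x
        have hev := (ContinuousMap.evalCLM ℝ (x : spectrum ℝ T)).intervalIntegral_comp_comm
          (a := 0) (b := N) (μ := volume) hint
        calc (∫ l in (0:ℝ)..N, (bigmap T).curry l) x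
            = ContinuousMap.evalCLM ℝ x (∫ l in (0:ℝ)..N, (bigmap T).curry l) := rfl
          _ = ∫ l in (0:ℝ)..N, ContinuousMap.evalCLM ℝ x ((bigmap T).curry l) := hev.symm
          _ = ∫ l in (0:ℝ)..N, ((bigmap T).curry l) x := rfl
          _ = ∫ l in (0:ℝ)..N, (x : ℝ) / (1 + l ^ 2 + (x : ℝ) ^ 2) := rfl
          _ = (x : ℝ) / Real.sqrt (1 + (x:ℝ) ^ 2) *
              Real.arctan (N / Real.sqrt (1 + (x:ℝ) ^ 2)) := scalar_int _ N

end exchange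

section tail
variable (T : H →L[ℂ] H)

lemma tail_bound [Nontrivial H] (hT : IsSelfAdjoint T) {N : ℝ} (hN : 0 < N) :
    ‖(π / 2) • boundedTransform T - cfc (fun t : ℝ =>
      t / Real.sqrt (1 + t ^ 2) * Real.arctan (N / Real.sqrt (1 + t ^ 2))) T‖ ≤ ‖T‖ / N := by
  have hs0 : ∀ t : ℝ, Real.sqrt (1 + t ^ 2) ≠ 0 := fun t =>
    (Real.sqrt_pos.mpr (by positivity)).ne'
  have hsq : Continuous fun t : ℝ => Real.sqrt (1 + t ^ 2) :=
    Real.continuous_sqrt.comp (by fun_prop)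
  have hf : Continuous (fun t : ℝ => t / Real.sqrt (1 + t ^ 2)) :=
    continuous_id.div hsq fun t => hs0 t
  have hg : Continuous (fun t : ℝ =>
      t / Real.sqrt (1 + t ^ 2) * Real.arctan (N / Real.sqrt (1 + t ^ 2))) :=
    hf.mul (Real.continuous_arctan.comp (continuous_const.div hsq fun t => hs0 t))
  have h1 : (π / 2) • boundedTransform T =
      cfc (fun t : ℝ => (π / 2) * (t / Real.sqrt (1 + t ^ 2))) T :=
    (cfc_const_mul (π / 2) _ T hf.continuousOn).symm
  rw [h1, ← cfc_sub (fun t : ℝ => (π / 2) * (t / Real.sqrt (1 + t ^ 2)))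
    (fun t : ℝ => t / Real.sqrt (1 + t ^ 2) * Real.arctan (N / Real.sqrt (1 + t ^ 2))) T
    (continuous_const.mul hf).continuousOn hg.continuousOn]
  apply norm_cfc_le (by positivity)
  intro x hx
  set s := Real.sqrt (1 + x ^ 2) with hsdef
  have hs : 0 < s := Real.sqrt_pos.mpr (by positivity)
  have hs1 : 1 ≤ s := by
    rw [show (1:ℝ) = Real.sqrt 1 by simp, hsdef]
    exact Real.sqrt_le_sqrt (by nlinarith [sq_nonneg x])
  have hxT : |x| ≤ ‖T‖ := by
    have := spectrum.norm_le_norm_of_mem hx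
    rwa [Real.norm_eq_abs] at this
  have harct : π / 2 - Real.arctan (N / s) = Real.arctan (s / N) := by
    have h := Real.arctan_inv_of_pos (div_pos hN hs)
    rw [inv_div] at h
    linarith
  have harctb : Real.arctan (s / N) ≤ s / N := arctan_le_self' (by positivity)
  have harctnn : 0 ≤ Real.arctan (s / N) := by
    have h0 : Real.arctan 0 ≤ Real.arctan (s / N) :=
      Real.arctan_strictMono.monotone (by positivity)
    rwa [Real.arctan_zero] at h0
  have heq : (π / 2) * (x / s) - x / s * Real.arctan (N / s) =
      x / s * Real.arctan (s / N) := by rw [← harct]; ring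
  rw [Real.norm_eq_abs, heq, abs_mul, abs_of_nonneg harctnn, abs_div,
    abs_of_pos hs]
  calc |x| / s * Real.arctan (s / N) ≤ |x| / s * (s / N) :=
        mul_le_mul_of_nonneg_left harctb (by positivity)
    _ = |x| / N := by field_simp
    _ ≤ ‖T‖ / N := by gcongr
end tail

lemma key_est (S T : H →L[ℂ] H) (hS : IsSelfAdjoint S) (hT : IsSelfAdjoint T) :
    ‖boundedTransform S - boundedTransform T‖ ≤ ‖S - T‖ := by
  rcases subsingleton_or_nontrivial H with hH | hH
  · have hsub : Subsingleton (H →L[ℂ] H) :=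
      ⟨fun a b => ContinuousLinearMap.ext fun x => Subsingleton.elim _ _⟩
    rw [Subsingleton.elim (boundedTransform S - boundedTransform T) 0, norm_zero]
    positivity
  have pi2 : (0:ℝ) < π / 2 := by positivity
  have suff : ∀ ε > (0:ℝ), (π / 2) * ‖boundedTransform S - boundedTransform T‖ ≤
      (π / 2) * ‖S - T‖ + ε := by
    intro ε hε
    set N : ℝ := (‖S‖ + ‖T‖ + 1) / ε with hNdef
    have hN : 0 < N := by positivity
    set IS := ∫ l in (0:ℝ)..N, cfc (fun t : ℝ => t / (1 + l ^ 2 + t ^ 2)) S with hIS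
    set IT := ∫ l in (0:ℝ)..N, cfc (fun t : ℝ => t / (1 + l ^ 2 + t ^ 2)) T with hIT
    have a1 : ‖(π / 2) • boundedTransform S - IS‖ ≤ ‖S‖ / N := by
      rw [hIS, integral_rep S hS N]
      exact tail_bound S hS hN
    have a3 : ‖IT - (π / 2) • boundedTransform T‖ ≤ ‖T‖ / N := by
      rw [norm_sub_rev, hIT, integral_rep T hT N]
      exact tail_bound T hT hN
    have a2 : ‖IS - IT‖ ≤ (π / 2) * ‖S - T‖ := by
      have intS : IntervalIntegrable
          (fun l : ℝ => cfc (fun t : ℝ => t / (1 + l ^ 2 + t ^ 2)) S) volume 0 N :=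
        (cfc_gl_cont S hS).intervalIntegrable _ _
      have intT : IntervalIntegrable
          (fun l : ℝ => cfc (fun t : ℝ => t / (1 + l ^ 2 + t ^ 2)) T) volume 0 N :=
        (cfc_gl_cont T hT).intervalIntegrable _ _
      have hsub : IS - IT = ∫ l in (0:ℝ)..N,
          (cfc (fun t : ℝ => t / (1 + l ^ 2 + t ^ 2)) S -
            cfc (fun t : ℝ => t / (1 + l ^ 2 + t ^ 2)) T) :=
        (intervalIntegral.integral_sub intS intT).symm
      have hgc : Continuous fun l : ℝ => (1 + l ^ 2)⁻¹ * ‖S - T‖ :=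
        (((continuous_const.add (continuous_pow 2)).inv₀ fun l => (by positivity : (1:ℝ) + l ^ 2 ≠ 0)).mul
          continuous_const)
      have hbound : ‖∫ l in (0:ℝ)..N,
          (cfc (fun t : ℝ => t / (1 + l ^ 2 + t ^ 2)) S -
            cfc (fun t : ℝ => t / (1 + l ^ 2 + t ^ 2)) T)‖ ≤
          |∫ l in (0:ℝ)..N, (1 + l ^ 2)⁻¹ * ‖S - T‖| := by
        apply intervalIntegral.norm_integral_le_abs_of_norm_le
        · exact Filter.Eventually.of_forall fun l =>
            gl_diff_norm S T hS hT (c := 1 + l ^ 2) (by positivity)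
        · exact hgc.intervalIntegrable _ _
      have hval : (∫ l in (0:ℝ)..N, (1 + l ^ 2)⁻¹ * ‖S - T‖) =
          Real.arctan N * ‖S - T‖ := by
        rw [intervalIntegral.integral_mul_const, integral_inv_one_add_sq,
          Real.arctan_zero, sub_zero]
      have harctnn : 0 ≤ Real.arctan N := by
        have h0 : Real.arctan 0 ≤ Real.arctan N := Real.arctan_strictMono.monotone hN.le
        rwa [Real.arctan_zero] at h0
      have hfin : |∫ l in (0:ℝ)..N, (1 + l ^ 2)⁻¹ * ‖S - T‖| ≤ (π / 2) * ‖S - T‖ := by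
        rw [hval, abs_of_nonneg (by positivity)]
        exact mul_le_mul_of_nonneg_right (Real.arctan_lt_pi_div_two N).le (norm_nonneg _)
      rw [hsub]
      exact hbound.trans hfin
    have tri : (π / 2) * ‖boundedTransform S - boundedTransform T‖ ≤
        ‖S‖ / N + (π / 2) * ‖S - T‖ + ‖T‖ / N := by
      have h0 : (π / 2) * ‖boundedTransform S - boundedTransform T‖ =
          ‖(π / 2) • boundedTransform S - (π / 2) • boundedTransform T‖ := by
        rw [← smul_sub, norm_smul, Real.norm_eq_abs, abs_of_pos pi2]
      rw [h0]
      calc ‖(π / 2) • boundedTransform S - (π / 2) • boundedTransform T‖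
          = ‖((π / 2) • boundedTransform S - IS) + (IS - IT) +
              (IT - (π / 2) • boundedTransform T)‖ := by abel_nf
        _ ≤ ‖((π / 2) • boundedTransform S - IS) + (IS - IT)‖ +
              ‖IT - (π / 2) • boundedTransform T‖ := norm_add_le _ _
        _ ≤ ‖(π / 2) • boundedTransform S - IS‖ + ‖IS - IT‖ +
              ‖IT - (π / 2) • boundedTransform T‖ := by
            have := norm_add_le ((π / 2) • boundedTransform S - IS) (IS - IT)
            linarith
        _ ≤ ‖S‖ / N + (π / 2) * ‖S - T‖ + ‖T‖ / N := by linarith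
    have hend : ‖S‖ / N + ‖T‖ / N ≤ ε := by
      have h1 : ‖S‖ / N + ‖T‖ / N = (‖S‖ + ‖T‖) / N := (add_div _ _ _).symm
      rw [h1, hNdef, div_div_eq_mul_div, div_le_iff₀ (by positivity)]
      nlinarith [norm_nonneg S, norm_nonneg T, hε]
    linarith
  have hfinal := le_of_forall_pos_le_add suff
  exact (mul_le_mul_iff_right₀ pi2).mp hfinal

end helpers

/-- For a self-adjoint operator `D` and a bounded self-adjoint
perturbation `A`, the bounded transforms satisfy `‖F_{D+A} − F_D‖ ≤ ‖A‖`; consequently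
`A ↦ F_{D+A}` is continuous (indeed `1`-Lipschitz) from bounded self-adjoint
perturbations to bounded operators. -/
theorem boundedTransform_norm_estimate
    {H : Type*} [NormedAddCommGroup H] [InnerProductSpace ℂ H] [CompleteSpace H]
    (D : H →L[ℂ] H) (hD : IsSelfAdjoint D) :
    (∀ A : H →L[ℂ] H, IsSelfAdjoint A →
      ‖boundedTransform (D + A) - boundedTransform D‖ ≤ ‖A‖) ∧
    LipschitzWith 1 (fun A : selfAdjoint (H →L[ℂ] H) =>
      boundedTransform (D + (A : H →L[ℂ] H))) ∧
    Continuous (fun A : selfAdjoint (H →L[ℂ] H) =>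
      boundedTransform (D + (A : H →L[ℂ] H))) := by
  have lip : LipschitzWith 1 (fun A : selfAdjoint (H →L[ℂ] H) =>
      boundedTransform (D + (A : H →L[ℂ] H))) := by
    apply LipschitzWith.of_dist_le_mul
    intro A B
    rw [NNReal.coe_one, one_mul, dist_eq_norm, Subtype.dist_eq, dist_eq_norm]
    calc ‖boundedTransform (D + (A : H →L[ℂ] H)) - boundedTransform (D + (B : H →L[ℂ] H))‖
        ≤ ‖(D + (A : H →L[ℂ] H)) - (D + (B : H →L[ℂ] H))‖ :=
          key_est _ _ (hD.add A.2) (hD.add B.2)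
      _ = ‖(A : H →L[ℂ] H) - (B : H →L[ℂ] H)‖ := by rw [add_sub_add_left_eq_sub]
  refine ⟨fun A hA => ?_, lip, lip.continuous⟩
  have := key_est (D + A) D (hD.add hA) hD
  rwa [add_sub_cancel_left] at this
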